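/- arXiv:0809.1176 — 9 statements merged into one kernel-verified Lean document; each statement's English description precedes it below -/
import Mathlib

section
/- If p and q are idempotents in a unital Banach algebra and ‖p - q‖ < 1/(1 + 2‖p‖), then p and q are conjugate: there exists an invertible u with u·p·u⁻¹ = q. -/
theorem stmt1 {A : Type*} [NormedRing A] [NormedAlgebra ℝ A] [CompleteSpace A]
    (p q : A) (hp : p * p = p) (hq : q * q = q)
    (h : ‖p - q‖ < 1 / (1 + 2 * ‖p‖)) :
    ∃ u : Aˣ, (u : A) * p * (↑u⁻¹ : A) = q := by
  set a : A := p + q - 2*(q*p) with ha_def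
  have hpos : (0:ℝ) < 1 + 2 * ‖p‖ := by positivity
  have hd1 : ‖p - q‖ * (1 + 2 * ‖p‖) < 1 := by
    rw [div_eq_inv_mul] at h
    calc ‖p - q‖ * (1 + 2 * ‖p‖) < (1 + 2 * ‖p‖)⁻¹ * 1 * (1 + 2 * ‖p‖) := by
          apply mul_lt_mul_of_pos_right _ hpos
          simpa using h
      _ = 1 := by field_simp
  have hdlt1 : ‖p - q‖ < 1 := by nlinarith [norm_nonneg p]
  have hqnorm : ‖q‖ ≤ ‖p‖ + ‖p - q‖ := by
    calc ‖q‖ = ‖p - (p - q)‖ := by rw [sub_sub_cancel]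
      _ ≤ ‖p‖ + ‖p - q‖ := norm_sub_le _ _
  have hsplit : a = q * (q - p) - (q - p) * p := by
    rw [ha_def]
    noncomm_ring [hp, hq]
  have hna : ‖a‖ < 1 := by
    have h1 : ‖a‖ ≤ ‖q‖ * ‖q - p‖ + ‖q - p‖ * ‖p‖ := by
      rw [hsplit]
      exact le_trans (norm_sub_le _ _) (add_le_add (norm_mul_le _ _) (norm_mul_le _ _))
    have h2 : ‖q - p‖ = ‖p - q‖ := norm_sub_rev _ _
    rw [h2] at h1
    nlinarith [norm_nonneg p, norm_nonneg q, norm_nonneg (p - q)]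
  set u : Aˣ := Units.oneSub a hna with hu_def
  have huval : (u : A) = 1 - a := rfl
  have key : (u : A) * p = q * (u : A) := by
    rw [huval, ha_def]
    have h1 : q*(q*p) = q*p := by rw [← mul_assoc, hq]
    have h2 : (q*p)*p = q*p := by rw [mul_assoc, hp]
    calc (1 - (p + q - 2*(q*p))) * p
        = p - p*p - q*p + 2*((q*p)*p) := by noncomm_ring
      _ = q*p := by rw [hp, h2]; noncomm_ring
      _ = q - q*p - q*q + 2*(q*(q*p)) := by rw [hq, h1]; noncomm_ring
      _ = q * (1 - (p + q - 2*(q*p))) := by noncomm_ring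
  refine ⟨u, ?_⟩
  calc (u : A) * p * (↑u⁻¹ : A) = q * (u : A) * (↑u⁻¹ : A) := by rw [key]
    _ = q := by rw [mul_assoc, Units.mul_inv, mul_one]
end

section
/- Let c : [0,1] → A be a continuous path of idempotents in a unital Banach algebra A. Then there exists a continuous path u : [0,1] → Aˣ of invertible elements with u(0) = 1 and u(t)·c(0)·u(t)⁻¹ = c(t) for all t. In particular c(1) is conjugate to c(0) by an invertible element connected to the identity. -/
open Set

section Aux

variable {A : Type*} [NormedRing A] [NormedAlgebra ℝ A] [CompleteSpace A]

set_option linter.unusedSectionVars false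

/-- A map into the units is continuous if its value map is continuous. -/
lemma aux_cont_units {X : Type*} [TopologicalSpace X] {v : X → Aˣ}
    (h : Continuous fun t => (v t : A)) : Continuous v := by
  rw [Units.continuous_iff]
  refine ⟨h, ?_⟩
  have he : (fun t => (↑(v t)⁻¹ : A)) = fun t => Ring.inverse ((v t : A)) := by
    funext t; rw [Ring.inverse_unit]
  rw [he]
  refine continuous_iff_continuousAt.2 fun t => ?_
  exact ContinuousAt.comp (x := t) (g := Ring.inverse) (f := fun t => (v t : A))
    (NormedRing.inverse_continuousAt (v t)) h.continuousAt

/-- A unit from an element close to 1. -/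
noncomputable def auxToUnit (x : A) (h : ‖x - 1‖ < 1) : Aˣ :=
  Units.oneSub (1 - x) (by rwa [norm_sub_rev] at h)

@[simp] lemma auxToUnit_val (x : A) (h : ‖x - 1‖ < 1) : (auxToUnit x h : A) = x := by
  simp [auxToUnit, Units.oneSub]

lemma auxToUnit_one (x : A) (h : ‖x - 1‖ < 1) (hx : x = 1) : auxToUnit x h = 1 := by
  ext; simp [hx]

variable (d : ℝ → A)

/-- The conjugating element. -/
def auxF (a b : ℝ) : A := d a * d b + (1 - d a) * (1 - d b)

lemma auxF_self (hi : ∀ x, d x * d x = d x) (a : ℝ) : auxF d a a = 1 := by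
  have h := hi a
  unfold auxF
  have h2 : (1 - d a) * (1 - d a) = 1 - d a := by
    rw [sub_mul, one_mul, mul_sub, mul_one, h]; abel
  rw [h, h2]; abel

lemma auxF_mul (hi : ∀ x, d x * d x = d x) (a b : ℝ) :
    auxF d a b * d b = d a * auxF d a b := by
  have hb := hi b
  have ha := hi a
  have e1 : (1 - d b) * d b = 0 := by rw [sub_mul, one_mul, hb, sub_self]
  have e2 : d a * (1 - d a) = 0 := by rw [mul_sub, mul_one, ha, sub_self]
  have L : auxF d a b * d b = d a * d b := by
    unfold auxF
    rw [add_mul, mul_assoc, hb, mul_assoc, e1, mul_zero, add_zero]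
  have R : d a * auxF d a b = d a * d b := by
    unfold auxF
    rw [mul_add, ← mul_assoc, ha, ← mul_assoc, e2, zero_mul, add_zero]
  rw [L]
  exact R.symm

/-- The inductive construction of the path of units. -/
lemma aux_main (hi : ∀ x, d x * d x = d x) (hd : Continuous d) (s : ℝ) (hs : 0 < s)
    (hδ : ∀ a b : ℝ, |b - a| ≤ s → ‖auxF d a b - 1‖ < 1) (k : ℕ) :
    ∃ U : ℝ → Aˣ, Continuous (fun t => (U t : A)) ∧ U 0 = 1 ∧
      ∀ t, 0 ≤ t → (U t : A) * d 0 = d (min t (k * s)) * (U t : A) := by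
  induction k with
  | zero =>
    refine ⟨fun _ => 1, continuous_const, rfl, fun t ht => ?_⟩
    simp only [Nat.cast_zero, zero_mul, min_eq_right ht, Units.val_one, one_mul, mul_one]
  | succ k ih =>
    obtain ⟨U, hU, hU0, hUc⟩ := ih
    -- the midpoint clamp
    set m : ℝ → ℝ := fun t => min (max t (k * s)) ((k + 1) * s) with hm
    have hmges : ∀ t, (k : ℝ) * s ≤ m t := fun t =>
      le_min (le_max_right _ _) (by nlinarith)
    have hmle : ∀ t, m t ≤ ((k : ℝ) + 1) * s := fun t => min_le_right _ _
    have hmnear : ∀ t, |(k : ℝ) * s - m t| ≤ s := by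
      intro t
      rw [abs_sub_le_iff]
      constructor
      · nlinarith [hmges t]
      · nlinarith [hmle t]
    have hmcont : Continuous m := (continuous_id.max continuous_const).min continuous_const
    set g : ℝ → Aˣ := fun t => auxToUnit (auxF d (m t) (k * s)) (hδ _ _ (hmnear t)) with hg
    refine ⟨fun t => g t * U t, ?_, ?_, ?_⟩
    · have heq : (fun t => ((g t * U t : Aˣ) : A)) =
          fun t => (d (m t) * d ((k : ℝ) * s) + (1 - d (m t)) * (1 - d ((k : ℝ) * s))) *
            (U t : A) := by
        funext t; simp [hg, auxF]
      rw [heq]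
      exact (((hd.comp hmcont).mul continuous_const).add
        ((continuous_const.sub (hd.comp hmcont)).mul continuous_const)).mul hU
    · show g 0 * U 0 = 1
      have hm0 : m 0 = (k : ℝ) * s := by
        rw [hm]
        simp only
        rw [max_eq_right (by positivity), min_eq_left (by nlinarith)]
      rw [hU0, mul_one, hg]
      exact auxToUnit_one _ _ (by rw [hm0, auxF_self d hi])
    · intro t ht
      have key : (g t : A) * d ((k : ℝ) * s) = d (m t) * (g t : A) := by
        simp only [hg, auxToUnit_val]
        exact auxF_mul d hi _ _
      show (↑(g t * U t) : A) * d 0 = d (min t ((↑(k + 1) : ℝ) * s)) * ↑(g t * U t)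
      rcases le_or_gt t ((k : ℝ) * s) with h | h
      · -- g t = 1 and min t ((k+1)s) = t
        have hmt : m t = (k : ℝ) * s := by
          rw [hm]; simp only
          rw [max_eq_right h, min_eq_left (by nlinarith)]
        have hg1 : (g t : A) = 1 := by
          simp only [hg, auxToUnit_val, hmt, auxF_self d hi]
        have hmin : min t ((↑(k + 1) : ℝ) * s) = min t ((k : ℝ) * s) := by
          push_cast
          rw [min_eq_left (by nlinarith), min_eq_left h]
        simp only [Units.val_mul]
        rw [mul_assoc, hUc t ht, hmin, hg1, one_mul, one_mul]
      · -- t ≥ k s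
        have hmin : min t ((k : ℝ) * s) = (k : ℝ) * s := min_eq_right h.le
        have hmt : m t = min t ((↑(k + 1) : ℝ) * s) := by
          rw [hm]; simp only
          rw [max_eq_left h.le]
          push_cast
          ring_nf
        simp only [Units.val_mul]
        rw [mul_assoc, hUc t ht, hmin, ← mul_assoc, key, hmt, mul_assoc]

end Aux

theorem stmt2 {A : Type*} [NormedRing A] [NormedAlgebra ℝ A] [CompleteSpace A]
    (c : unitInterval → A) (hc : Continuous c)
    (hidem : ∀ t, c t * c t = c t) :
    ∃ u : unitInterval → Aˣ, Continuous u ∧ u 0 = 1 ∧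
      ∀ t, (u t : A) * c 0 * (↑(u t)⁻¹ : A) = c t := by
  classical
  set π : ℝ → unitInterval := fun x => Set.projIcc 0 1 zero_le_one x with hπ
  set d : ℝ → A := fun x => c (π x) with hdc
  have hπcont : Continuous π := continuous_projIcc
  have hd : Continuous d := hc.comp hπcont
  have hi : ∀ x, d x * d x = d x := fun x => hidem (π x)
  -- uniform continuity to get δ
  have hFc : Continuous (fun p : unitInterval × unitInterval =>
      c p.1 * c p.2 + (1 - c p.1) * (1 - c p.2)) := by
    fun_prop
  have hFu : UniformContinuous (fun p : unitInterval × unitInterval =>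
      c p.1 * c p.2 + (1 - c p.1) * (1 - c p.2)) :=
    CompactSpace.uniformContinuous_of_continuous hFc
  have hπu : UniformContinuous π := (LipschitzWith.projIcc zero_le_one).uniformContinuous
  have hGu : UniformContinuous (fun p : ℝ × ℝ => auxF d p.1 p.2) := by
    have heq : (fun p : ℝ × ℝ => auxF d p.1 p.2) =
        (fun p : unitInterval × unitInterval =>
          c p.1 * c p.2 + (1 - c p.1) * (1 - c p.2)) ∘ (fun p : ℝ × ℝ => (π p.1, π p.2)) := by
      funext p; rfl
    rw [heq]
    exact hFu.comp ((hπu.comp uniformContinuous_fst).prodMk (hπu.comp uniformContinuous_snd))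
  obtain ⟨δ, hδpos, hδ⟩ := Metric.uniformContinuous_iff.mp hGu 1 one_pos
  set s : ℝ := δ / 2 with hs
  have hspos : 0 < s := by positivity
  have hnear : ∀ a b : ℝ, |b - a| ≤ s → ‖auxF d a b - 1‖ < 1 := by
    intro a b hab
    have hdist : dist ((a, b) : ℝ × ℝ) ((a, a) : ℝ × ℝ) < δ := by
      rw [Prod.dist_eq]
      simp only [dist_self]
      rw [max_eq_right dist_nonneg, Real.dist_eq]
      rw [hs] at hab
      linarith [abs_nonneg (b - a)]
    have h2 := hδ hdist
    rw [show auxF d a a = 1 from auxF_self d hi a] at h2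
    rwa [dist_eq_norm] at h2
  -- choose N with 1 ≤ N * s
  obtain ⟨N, hN⟩ := exists_nat_gt (1 / s)
  have hNs : 1 ≤ (N : ℝ) * s := by
    rw [div_lt_iff₀ hspos] at hN
    linarith
  obtain ⟨U, hUc, hU0, hUconj⟩ := aux_main d hi hd s hspos hnear N
  refine ⟨fun t => U t, ?_, ?_, ?_⟩
  · exact aux_cont_units (hUc.comp continuous_subtype_val)
  · simpa using hU0
  · intro t
    have ht0 : (0 : ℝ) ≤ (t : ℝ) := t.2.1
    have ht1 : (t : ℝ) ≤ 1 := t.2.2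
    have hmin : min ((t : ℝ)) ((N : ℝ) * s) = (t : ℝ) := min_eq_left (le_trans ht1 hNs)
    have hdt : d (t : ℝ) = c t := by
      simp only [hdc, hπ]
      congr 1
      exact Set.projIcc_val zero_le_one t
    have hd0 : d 0 = c 0 := by
      simp only [hdc, hπ]
      congr 1
      rw [Set.projIcc_left]
      rfl
    have hconj := hUconj (t : ℝ) ht0
    rw [hmin, hdt, hd0] at hconj
    rw [hconj, mul_assoc, Units.mul_inv, mul_one]
end

section
/- If two idempotents p, q in a unital Banach algebra lie in the same path component of the set of idempotents, then they are conjugate: there is an invertible element g with g·p = q·g. -/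
lemma idem_near_conj {A : Type*} [NormedRing A] [CompleteSpace A]
    (p q : A) (hp : p * p = p) (hq : q * q = q) (hd : ‖p - q‖ < 1) :
    ∃ g : Aˣ, (g : A) * p = q * (g : A) := by
  have hp' : ∀ x : A, p * (p * x) = p * x := fun x => by rw [← mul_assoc, hp]
  have hq' : ∀ x : A, q * (q * x) = q * x := fun x => by rw [← mul_assoc, hq]
  set u : A := q*p + (1-q)*(1-p) with hu
  set v : A := p*q + (1-p)*(1-q) with hv
  have hw : ‖(p - q) * (p - q)‖ < 1 := by
    calc ‖(p - q) * (p - q)‖ ≤ ‖p - q‖ * ‖p - q‖ := norm_mul_le _ _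
    _ < 1 := by nlinarith [norm_nonneg (p - q)]
  set w : Aˣ := Units.oneSub ((p - q) * (p - q)) hw with hwdef
  have hwc : (w : A) = 1 - (p - q) * (p - q) := rfl
  have huv : u * v = (w : A) := by
    rw [hwc, hu, hv]
    simp only [mul_sub, sub_mul, mul_add, add_mul, mul_one, one_mul, mul_assoc, hp, hq, hp', hq']
    abel
  have hvu : v * u = (w : A) := by
    rw [hwc, hu, hv]
    simp only [mul_sub, sub_mul, mul_add, add_mul, mul_one, one_mul, mul_assoc, hp, hq, hp', hq']
    abel
  have hup : u * p = q * u := by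
    rw [hu]
    simp only [mul_sub, sub_mul, mul_add, add_mul, mul_one, one_mul, mul_assoc, hp, hq, hp', hq']
    abel
  have hcomm : Commute (w : A) v := by
    show (w : A) * v = v * (w : A)
    rw [← huv, ← mul_assoc, hvu, huv]
  have hcomm' : (↑w⁻¹ : A) * v = v * ↑w⁻¹ := hcomm.units_inv_left
  refine ⟨⟨u, v * ↑w⁻¹, ?_, ?_⟩, hup⟩
  · rw [← mul_assoc, huv, w.mul_inv]
  · rw [← hcomm', mul_assoc, hvu, w.inv_mul]

theorem stmt3 {A : Type*} [NormedRing A] [NormedAlgebra ℝ A] [CompleteSpace A]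
    (p q : A) (hp : p * p = p) (hq : q * q = q)
    (h : JoinedIn {x : A | x * x = x} p q) :
    ∃ g : Aˣ, (g : A) * p = q * (g : A) := by
  obtain ⟨γ, hγ⟩ := h
  have hidem : ∀ t, γ t * γ t = γ t := fun t => hγ t
  set S : Set unitInterval := {t | ∃ g : Aˣ, (g : A) * p = γ t * (g : A)} with hS
  have hstep : ∀ s t : unitInterval, s ∈ S → ‖γ s - γ t‖ < 1 → t ∈ S := by
    intro s t ⟨g, hg⟩ hd
    obtain ⟨g', hg'⟩ := idem_near_conj (γ s) (γ t) (hidem s) (hidem t) hd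
    exact ⟨g' * g, by push_cast; rw [mul_assoc, hg, ← mul_assoc, hg', mul_assoc]⟩
  have hnear : ∀ t : unitInterval, ∀ᶠ s in nhds t, ‖γ s - γ t‖ < 1 := by
    intro t
    have : Continuous fun s => ‖γ s - γ t‖ := (γ.continuous.sub continuous_const).norm
    have h0 : ‖γ t - γ t‖ < 1 := by simp
    exact Filter.Tendsto.eventually_lt_const h0 (this.tendsto t)
  have hclopen : IsClopen S := by
    constructor
    · rw [← isOpen_compl_iff]
      rw [isOpen_iff_mem_nhds]
      intro t ht
      filter_upwards [hnear t] with s hs hsS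
      exact ht (hstep s t hsS hs)
    · rw [isOpen_iff_mem_nhds]
      intro t ht
      filter_upwards [hnear t] with s hs
      exact hstep t s ht (by rwa [norm_sub_rev])
  have h0 : (0 : unitInterval) ∈ S := ⟨1, by simp [γ.source]⟩
  have : S = Set.univ := hclopen.eq_univ ⟨0, h0⟩
  have h1 : (1 : unitInterval) ∈ S := this ▸ Set.mem_univ _
  obtain ⟨g, hg⟩ := h1
  exact ⟨g, by rwa [γ.target] at hg⟩
end

section
/- Let E be a Banach space and p ∈ L(E) a continuous projection with range X and kernel Y, and let t ∈ GL(E). If the conjugate projection q = t·p·t⁻¹ is joined to p by a continuous path of idempotents in L(E), then there exist s ∈ GL(E) in the path component of the identity such that s⁻¹·t commutes with p. -/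
open unitInterval

section Aux

variable {A : Type*} [NormedRing A] [NormedSpace ℝ A] [CompleteSpace A]

private lemma joined_mul {G : Type*} [TopologicalSpace G] [Monoid G] [ContinuousMul G]
    {a b c d : G} (h1 : Joined a b) (h2 : Joined c d) : Joined (a * c) (b * d) := by
  obtain ⟨γ₁⟩ := h1
  obtain ⟨γ₂⟩ := h2
  exact ⟨⟨⟨fun r => γ₁ r * γ₂ r, γ₁.continuous.mul γ₂.continuous⟩, by simp, by simp⟩⟩

/-- A unit at distance `< 1` from `1` is joined to `1` in the units group. -/
private lemma joined_one_of_norm_lt {x : A} (hx : ‖x‖ < 1) (u : Aˣ) (hu : (u : A) = 1 - x) :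
    Joined (1 : Aˣ) u := by
  have key : ∀ r : I, ‖(r : ℝ) • x‖ < 1 := by
    intro r
    rw [norm_smul, Real.norm_eq_abs, abs_of_nonneg r.2.1]
    calc (r : ℝ) * ‖x‖ ≤ 1 * ‖x‖ := by
          apply mul_le_mul_of_nonneg_right r.2.2 (norm_nonneg x)
      _ < 1 := by rwa [one_mul]
  have cont : Continuous (fun r : I => Units.oneSub ((r : ℝ) • x) (key r)) := by
    apply (Units.isOpenEmbedding_val (R := A)).toIsEmbedding.continuous_iff.2
    show Continuous fun r : I => (1 : A) - (r : ℝ) • x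
    fun_prop
  refine ⟨⟨⟨fun r => Units.oneSub ((r : ℝ) • x) (key r), cont⟩, ?_, ?_⟩⟩
  · apply Units.ext; simp
  · apply Units.ext; simp [hu]

/-- Conjugating idempotents which are close to each other. -/
private lemma conj_step {a b : A} (ha : a * a = a) (hb : b * b = b)
    (hsmall : ‖b - a‖ * (2 * ‖a‖ + ‖(1 : A)‖) < 1) :
    ∃ u : Aˣ, Joined (1 : Aˣ) u ∧ (u : A) * a = b * (u : A) := by
  set x : A := (b - a) * (a + a - 1) with hx
  have hxnorm : ‖x‖ < 1 := by
    calc ‖x‖ ≤ ‖b - a‖ * ‖a + a - 1‖ := norm_mul_le _ _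
      _ ≤ ‖b - a‖ * (2 * ‖a‖ + ‖(1 : A)‖) := by
          apply mul_le_mul_of_nonneg_left _ (norm_nonneg _)
          calc ‖a + a - 1‖ ≤ ‖a + a‖ + ‖(1 : A)‖ := norm_sub_le _ _
            _ ≤ 2 * ‖a‖ + ‖(1 : A)‖ := by
                have h1 : ‖a + a‖ ≤ ‖a‖ + ‖a‖ := norm_add_le _ _
                linarith
      _ < 1 := hsmall
  have hxnorm' : ‖-x‖ < 1 := by simpa using hxnorm
  refine ⟨Units.oneSub (-x) hxnorm',
    joined_one_of_norm_lt hxnorm' _ (Units.val_oneSub _ _), ?_⟩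
  rw [Units.val_oneSub, sub_neg_eq_add]
  have haa : ∀ y : A, a * (a * y) = a * y := fun y => by rw [← mul_assoc, ha]
  have hbb : ∀ y : A, b * (b * y) = b * y := fun y => by rw [← mul_assoc, hb]
  simp only [hx, mul_sub, sub_mul, mul_add, add_mul, mul_one, one_mul, mul_assoc, ha, hb,
    haa, hbb]
  abel

end Aux

theorem stmt4 {E : Type*} [NormedAddCommGroup E] [NormedSpace ℝ E] [CompleteSpace E]
    (p : E →L[ℝ] E) (hp : p * p = p)
    (t : (E →L[ℝ] E)ˣ)
    (h : JoinedIn {r : E →L[ℝ] E | r * r = r} p ((t : E →L[ℝ] E) * p * (↑t⁻¹ : E →L[ℝ] E))) :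
    ∃ s : (E →L[ℝ] E)ˣ, Joined (1 : (E →L[ℝ] E)ˣ) s ∧
      Commute ((↑s⁻¹ : E →L[ℝ] E) * (t : E →L[ℝ] E)) p := by
  obtain ⟨γ, hγ⟩ := h
  have hidem : ∀ r : I, (γ r) * (γ r) = γ r := fun r => hγ r
  set S : Set I := {r | ∃ u : (E →L[ℝ] E)ˣ,
    Joined (1 : (E →L[ℝ] E)ˣ) u ∧ (u : E →L[ℝ] E) * p = γ r * (u : E →L[ℝ] E)} with hSdef
  have step : ∀ r r' : I,
      ‖γ r - γ r'‖ * (2 * ‖γ r'‖ + ‖(1 : E →L[ℝ] E)‖) < 1 → r' ∈ S → r ∈ S := by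
    rintro r r' hsm ⟨u₀, hu₀j, hu₀⟩
    obtain ⟨u, huj, hu⟩ := conj_step (hidem r') (hidem r) hsm
    refine ⟨u * u₀, by simpa using joined_mul huj hu₀j, ?_⟩
    rw [Units.val_mul, mul_assoc, hu₀, ← mul_assoc, hu, mul_assoc]
  have hnbhd : ∀ r : I, {r' : I |
      ‖γ r - γ r'‖ * (2 * ‖γ r'‖ + ‖(1 : E →L[ℝ] E)‖) < 1 ∧
      ‖γ r' - γ r‖ * (2 * ‖γ r‖ + ‖(1 : E →L[ℝ] E)‖) < 1} ∈ nhds r := by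
    intro r
    have c0 : Continuous fun r' : I => γ r' := γ.continuous
    have c1 : ContinuousAt
        (fun r' : I => ‖γ r - γ r'‖ * (2 * ‖γ r'‖ + ‖(1 : E →L[ℝ] E)‖)) r := by
      exact (((continuous_const.sub c0).norm.mul
        ((continuous_const.mul c0.norm).add continuous_const)).continuousAt)
    have c2 : ContinuousAt
        (fun r' : I => ‖γ r' - γ r‖ * (2 * ‖γ r‖ + ‖(1 : E →L[ℝ] E)‖)) r := by
      exact (((c0.sub continuous_const).norm.mul continuous_const).continuousAt)
    apply Filter.inter_mem
    · exact c1.eventually_lt continuousAt_const (by simp)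
    · exact c2.eventually_lt continuousAt_const (by simp)
  have hopen : IsOpen S := by
    rw [isOpen_iff_mem_nhds]
    intro r hr
    exact Filter.mem_of_superset (hnbhd r) (fun r' hr' => step r' r hr'.2 hr)
  have hclosed : IsClosed S := by
    apply isClosed_of_closure_subset
    intro r hr
    obtain ⟨r', hr'U, hr'S⟩ := mem_closure_iff_nhds.1 hr _ (hnbhd r)
    exact step r r' hr'U.1 hr'S
  have h0 : (0 : I) ∈ S := ⟨1, Joined.refl 1, by simp⟩
  have hall : S = Set.univ := (IsClopen.eq_univ ⟨hclosed, hopen⟩) ⟨0, h0⟩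
  have h1 : (1 : I) ∈ S := hall ▸ Set.mem_univ _
  obtain ⟨s, hsj, hs⟩ := h1
  rw [γ.target] at hs
  refine ⟨s, hsj, ?_⟩
  have key : Commute ((↑(t⁻¹ * s) : E →L[ℝ] E)) p := by
    show (↑(t⁻¹ * s) : E →L[ℝ] E) * p = p * ↑(t⁻¹ * s)
    rw [Units.val_mul, mul_assoc, hs, ← mul_assoc, ← mul_assoc, ← mul_assoc,
      Units.inv_mul, one_mul, mul_assoc]
  have key2 := key.units_inv_left
  rw [mul_inv_rev, inv_inv] at key2
  simpa [Units.val_mul] using key2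
end

section
/- Let E be a Banach space and p a continuous projection with range X and kernel Y. Every projection conjugate to p (i.e., of the form t·p·t⁻¹ with t ∈ GL(E)) is joined to p by a continuous path of projections if and only if the inclusion GL(X) × GL(Y) → GL(E), (x,y) ↦ x ⊕ y, induces a surjection on path components π₀. -/
section RingLemmas
variable {R : Type*} [Ring R]

/-- auxiliary "transition" element between two idempotents -/
def myconn (a b : R) : R := b * a + (1 - b) * (1 - a)

lemma myconn_self {a : R} (ha : a * a = a) : myconn a a = 1 := by
  unfold myconn
  have : (1 - a) * (1 - a) = 1 - a - a + a * a := by noncomm_ring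
  rw [this, ha]; abel

lemma myconn_mul_myconn {a b : R} (ha : a * a = a) (hb : b * b = b) :
    myconn a b * myconn b a = 1 - (a - b) * (a - b) := by
  unfold myconn
  have h1 : ∀ x : R, a * (a * x) = a * x := fun x => by rw [← mul_assoc, ha]
  have h2 : ∀ x : R, b * (b * x) = b * x := fun x => by rw [← mul_assoc, hb]
  simp only [mul_add, add_mul, mul_sub, sub_mul, mul_one, one_mul, mul_assoc, h1, h2, ha, hb]
  abel

lemma myconn_conj {a b : R} (ha : a * a = a) (hb : b * b = b) :
    myconn a b * a = b * myconn a b := by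
  unfold myconn
  have h1 : ∀ x : R, a * (a * x) = a * x := fun x => by rw [← mul_assoc, ha]
  have h2 : ∀ x : R, b * (b * x) = b * x := fun x => by rw [← mul_assoc, hb]
  simp only [mul_add, add_mul, mul_sub, sub_mul, mul_one, one_mul, mul_assoc, h1, h2, ha, hb]
  abel

lemma commute_sq {a b : R} (ha : a * a = a) (hb : b * b = b) :
    Commute (myconn b a) (1 - (a - b) * (a - b)) := by
  unfold myconn Commute SemiconjBy
  have h1 : ∀ x : R, a * (a * x) = a * x := fun x => by rw [← mul_assoc, ha]
  have h2 : ∀ x : R, b * (b * x) = b * x := fun x => by rw [← mul_assoc, hb]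
  simp only [mul_add, add_mul, mul_sub, sub_mul, mul_one, one_mul, mul_assoc, h1, h2, ha, hb]
  abel

end RingLemmas

section NormedLemmas
variable {R : Type*} [NormedRing R] [CompleteSpace R]

noncomputable def myconnUnit {a b : R} (ha : a * a = a) (hb : b * b = b)
    (h : ‖a - b‖ < 1) : Rˣ := by
  have hn : ‖(a - b) * (a - b)‖ < 1 := by
    have := norm_mul_le (a - b) (a - b)
    nlinarith [norm_nonneg (a - b)]
  refine ⟨myconn a b, myconn b a * ↑(Units.oneSub _ hn)⁻¹, ?_, ?_⟩
  · rw [← mul_assoc, myconn_mul_myconn ha hb, ← Units.val_oneSub ((a-b)*(a-b)) hn,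
      Units.mul_inv]
  · have hc : Commute (myconn a b) ↑(Units.oneSub ((a-b)*(a-b)) hn)⁻¹ := by
      refine Commute.units_inv_right ?_
      rw [Units.val_oneSub]
      have : (1:R) - (a - b) * (a - b) = 1 - (b - a) * (b - a) := by noncomm_ring
      rw [this]; exact commute_sq hb ha
    rw [mul_assoc, ← hc.eq, ← mul_assoc, myconn_mul_myconn hb ha]
    have : (1:R) - (b - a) * (b - a) = 1 - (a - b) * (a - b) := by noncomm_ring
    rw [this, ← Units.val_oneSub ((a-b)*(a-b)) hn, Units.mul_inv]

@[simp] lemma myconnUnit_val {a b : R} (ha : a * a = a) (hb : b * b = b)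
    (h : ‖a - b‖ < 1) : (myconnUnit ha hb h : R) = myconn a b := rfl

end NormedLemmas

lemma my_abs_le_of_mem_uIcc {ρ σ τ : ℝ} (h : ρ ∈ Set.uIcc σ τ) : |ρ - τ| ≤ |σ - τ| := by
  rw [Set.mem_uIcc] at h
  rcases h with ⟨h1, h2⟩ | ⟨h1, h2⟩
  · have he : |σ - τ| = τ - σ := by rw [abs_sub_comm, abs_of_nonneg (by linarith)]
    rw [he, abs_le]; constructor <;> linarith
  · have he : |σ - τ| = σ - τ := abs_of_nonneg (by linarith)
    rw [he, abs_le]; constructor <;> linarith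

section Glue
variable {R : Type*} [NormedRing R] [CompleteSpace R]

lemma my_joined_mul {a b c d : Rˣ} (h1 : Joined a b) (h2 : Joined c d) :
    Joined (a * c) (b * d) := by
  obtain ⟨γ1⟩ := h1; obtain ⟨γ2⟩ := h2
  exact ⟨⟨⟨fun s => γ1 s * γ2 s, γ1.continuous.mul γ2.continuous⟩, by simp, by simp⟩⟩

lemma my_segment {f : ℝ → R} (hf : Continuous f) (hidem : ∀ ρ, f ρ * f ρ = f ρ)
    {σ τ : ℝ} (h : ∀ ρ ∈ Set.uIcc σ τ, ‖f ρ - f σ‖ < 1) :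
    ∃ v : Rˣ, Joined 1 v ∧ (v : R) * f σ = f τ * (v : R) := by
  set φ : unitInterval → ℝ := fun s => σ + (s : ℝ) * (τ - σ) with hφ
  have hmem : ∀ s : unitInterval, φ s ∈ Set.uIcc σ τ := by
    intro s
    have h1 : (1 - (s : ℝ)) • σ + (s : ℝ) • τ ∈ Set.uIcc σ τ :=
      (convex_uIcc σ τ) Set.left_mem_uIcc Set.right_mem_uIcc (by linarith [s.2.2]) s.2.1 (by ring)
    have : φ s = (1 - (s : ℝ)) • σ + (s : ℝ) • τ := by simp [hφ, smul_eq_mul]; ring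
    rw [this]; exact h1
  have hb : ∀ s : unitInterval, ‖f σ - f (φ s)‖ < 1 := by
    intro s; rw [norm_sub_rev]; exact h _ (hmem s)
  have hφ0 : φ 0 = σ := by simp [hφ]
  have hφ1 : φ 1 = τ := by simp [hφ]
  set V : unitInterval → Rˣ := fun s => myconnUnit (hidem σ) (hidem (φ s)) (hb s) with hV
  have hVcont : Continuous V := by
    rw [Units.isOpenEmbedding_val.isEmbedding.continuous_iff]
    have hφc : Continuous φ := by
      exact continuous_const.add (continuous_subtype_val.mul continuous_const)
    have : (Units.val ∘ V) = fun s => myconn (f σ) (f (φ s)) := rfl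
    rw [this]
    unfold myconn
    exact ((hf.comp hφc).mul continuous_const).add
      ((continuous_const.sub (hf.comp hφc)).mul continuous_const)
  refine ⟨V 1, ⟨⟨⟨V, hVcont⟩, ?_, rfl⟩⟩, ?_⟩
  · apply Units.ext
    show myconn (f σ) (f (φ 0)) = 1
    rw [hφ0]; exact myconn_self (hidem σ)
  · show myconn (f σ) (f (φ 1)) * f σ = f τ * myconn (f σ) (f (φ 1))
    rw [hφ1]; exact myconn_conj (hidem σ) (hidem τ)

lemma my_conj_exists {f : ℝ → R} (hf : Continuous f) (hidem : ∀ ρ, f ρ * f ρ = f ρ) :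
    ∃ u : Rˣ, Joined 1 u ∧ (u : R) * f 0 = f 1 * (u : R) := by
  set S := {τ : ℝ | ∃ u : Rˣ, Joined 1 u ∧ (u : R) * f 0 = f τ * (u : R)} with hS
  have hne : (0 : ℝ) ∈ S := ⟨1, Joined.refl 1, by simp⟩
  have hopen : IsOpen S := by
    rw [Metric.isOpen_iff]
    rintro τ ⟨u, hu1, hu2⟩
    obtain ⟨δ, hδ, hδ2⟩ := Metric.continuousAt_iff.1 hf.continuousAt 1 one_pos
    refine ⟨δ, hδ, fun σ hσ => ?_⟩
    have hseg : ∀ ρ ∈ Set.uIcc τ σ, ‖f ρ - f τ‖ < 1 := by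
      intro ρ hρ
      rw [Set.uIcc_comm] at hρ
      have h1 : |ρ - τ| ≤ |σ - τ| := my_abs_le_of_mem_uIcc hρ
      have h2 : dist ρ τ < δ := by
        rw [Real.dist_eq]
        calc |ρ - τ| ≤ |σ - τ| := h1
          _ < δ := by rw [← Real.dist_eq]; exact hσ
      have := hδ2 h2
      rwa [dist_eq_norm] at this
    obtain ⟨v, hv1, hv2⟩ := my_segment hf hidem hseg
    exact ⟨v * u, by simpa using my_joined_mul hv1 hu1,
      by rw [Units.val_mul, mul_assoc, hu2, ← mul_assoc, hv2, mul_assoc]⟩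
  have hclosed : IsClosed S := by
    rw [← closure_subset_iff_isClosed]
    intro τ hτ
    obtain ⟨δ, hδ, hδ2⟩ := Metric.continuousAt_iff.1 hf.continuousAt (1/2) (by norm_num)
    obtain ⟨σ, hσS, hστ⟩ := Metric.mem_closure_iff.1 hτ δ hδ
    obtain ⟨u, hu1, hu2⟩ := hσS
    have hfd : ∀ ρ, |ρ - τ| < δ → ‖f ρ - f τ‖ < 1/2 := by
      intro ρ hρ
      have := hδ2 (by rwa [Real.dist_eq]); rwa [dist_eq_norm] at this
    have hseg : ∀ ρ ∈ Set.uIcc σ τ, ‖f ρ - f σ‖ < 1 := by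
      intro ρ hρ
      have h1 : |ρ - τ| ≤ |σ - τ| := my_abs_le_of_mem_uIcc hρ
      have hστ' : |σ - τ| < δ := by rw [← Real.dist_eq]; rwa [dist_comm]
      have b1 : ‖f ρ - f τ‖ < 1/2 := hfd ρ (lt_of_le_of_lt h1 hστ')
      have b2 : ‖f τ - f σ‖ < 1/2 := by
        rw [norm_sub_rev]; exact hfd σ hστ'
      calc ‖f ρ - f σ‖ ≤ ‖f ρ - f τ‖ + ‖f τ - f σ‖ := norm_sub_le_norm_sub_add_norm_sub _ _ _
        _ < 1 := by linarith
    obtain ⟨v, hv1, hv2⟩ := my_segment hf hidem hseg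
    exact ⟨v * u, by simpa using my_joined_mul hv1 hu1,
      by rw [Units.val_mul, mul_assoc, hu2, ← mul_assoc, hv2, mul_assoc]⟩
  have : S = Set.univ := (IsClopen.eq_univ ⟨hclosed, hopen⟩ ⟨0, hne⟩)
  exact (this ▸ Set.mem_univ 1 : (1:ℝ) ∈ S)

end Glue

section Decomp
variable {X Y : Type*} [NormedAddCommGroup X] [NormedSpace ℝ X]
  [NormedAddCommGroup Y] [NormedSpace ℝ Y]

open ContinuousLinearMap

lemma my_decomp (m : (X × Y) →L[ℝ] (X × Y))
    (hm : m * ((ContinuousLinearMap.id ℝ X).prodMap (0 : Y →L[ℝ] Y)) =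
      ((ContinuousLinearMap.id ℝ X).prodMap (0 : Y →L[ℝ] Y)) * m) :
    m = ((fst ℝ X Y).comp (m.comp (inl ℝ X Y))).prodMap
        ((snd ℝ X Y).comp (m.comp (inr ℝ X Y))) := by
  have key : ∀ w : X × Y, m (w.1, 0) = ((m w).1, 0) := by
    intro w
    have := congrArg (fun g : (X × Y) →L[ℝ] (X × Y) => g w) hm
    simpa [mul_apply, Prod.map] using this
  refine ContinuousLinearMap.ext fun v => ?_
  obtain ⟨a, b⟩ := v
  have hadd : m (a, b) = m (a, 0) + m (0, b) := by
    rw [← map_add]; norm_num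
  have h1 : (m (a, 0)).1 = (m (a, b)).1 := by
    have := key (a, b); rw [this]
  have h2 : (m (a, 0)).2 = 0 := by
    have := key (a, 0); rw [this]
  refine Prod.ext ?_ ?_
  · simp only [coe_prodMap', Prod.map, coe_comp', Function.comp_apply, coe_fst', coe_snd',
      inl_apply, inr_apply]
    exact h1.symm
  · simp only [coe_prodMap', Prod.map, coe_comp', Function.comp_apply, coe_fst', coe_snd',
      inl_apply, inr_apply]
    rw [hadd]
    simp [h2]

lemma my_block_x {a a' : X →L[ℝ] X} {b b' : Y →L[ℝ] Y}
    (h : (a.prodMap b) * (a'.prodMap b') = 1) : a * a' = 1 := by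
  ext v
  have := congrArg (fun g : (X × Y) →L[ℝ] (X × Y) => (g (v, 0)).1) h
  simpa [mul_apply, Prod.map] using this

lemma my_block_y {a a' : X →L[ℝ] X} {b b' : Y →L[ℝ] Y}
    (h : (a.prodMap b) * (a'.prodMap b') = 1) : b * b' = 1 := by
  ext v
  have := congrArg (fun g : (X × Y) →L[ℝ] (X × Y) => (g (0, v)).2) h
  simpa [mul_apply, Prod.map] using this

end Decomp

theorem stmt6 {X Y : Type*} [NormedAddCommGroup X] [NormedSpace ℝ X] [CompleteSpace X]
    [NormedAddCommGroup Y] [NormedSpace ℝ Y] [CompleteSpace Y]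
    (p : (X × Y) →L[ℝ] (X × Y))
    (hp : p = (ContinuousLinearMap.id ℝ X).prodMap (0 : Y →L[ℝ] Y)) :
    (∀ t : ((X × Y) →L[ℝ] (X × Y))ˣ,
        JoinedIn {r : (X × Y) →L[ℝ] (X × Y) | r * r = r} p
          ((t : (X × Y) →L[ℝ] (X × Y)) * p * (↑t⁻¹ : (X × Y) →L[ℝ] (X × Y)))) ↔
      (∀ t : ((X × Y) →L[ℝ] (X × Y))ˣ,
        ∃ (x : (X →L[ℝ] X)ˣ) (y : (Y →L[ℝ] Y)ˣ) (s : ((X × Y) →L[ℝ] (X × Y))ˣ),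
          (s : (X × Y) →L[ℝ] (X × Y)) = (x : X →L[ℝ] X).prodMap (y : Y →L[ℝ] Y) ∧
          Joined t s) := by
  have hpp : p * p = p := by
    subst hp
    refine ContinuousLinearMap.ext fun v => ?_
    simp [ContinuousLinearMap.mul_apply, Prod.map]
  constructor
  · -- forward
    intro h t
    set q : (X × Y) →L[ℝ] (X × Y) := ↑t * p * ↑t⁻¹ with hq
    obtain ⟨γ, hγ⟩ := h t
    set f : ℝ → ((X × Y) →L[ℝ] (X × Y)) := ⇑γ.extend with hfdef
    have hf : Continuous f := γ.continuous_extend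
    have hidem : ∀ ρ, f ρ * f ρ = f ρ := by
      intro ρ
      have : f ρ = γ (Set.projIcc 0 1 zero_le_one ρ) := rfl
      rw [this]; exact hγ _
    obtain ⟨u, hu1, hu2⟩ := my_conj_exists hf hidem
    rw [hfdef, γ.extend_zero, γ.extend_one] at hu2
    -- hu2 : ↑u * p = q * ↑u
    set s : ((X × Y) →L[ℝ] (X × Y))ˣ := u⁻¹ * t with hs
    have hts : Joined t s := by
      have h1 : Joined (u * s) ((1 : _ˣ) * s) := my_joined_mul hu1.symm (Joined.refl s)
      rw [mul_inv_cancel_left, one_mul] at h1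
      exact h1
    have hpu : p * ↑u⁻¹ = (↑u⁻¹ : (X × Y) →L[ℝ] (X × Y)) * q := by
      calc p * ↑u⁻¹ = ↑u⁻¹ * (↑u * p) * ↑u⁻¹ := by
            rw [← mul_assoc, Units.inv_mul, one_mul]
        _ = ↑u⁻¹ * (q * ↑u) * ↑u⁻¹ := by rw [hu2]
        _ = ↑u⁻¹ * q := by rw [mul_assoc, mul_assoc, Units.mul_inv, mul_one]
    have hcomm : (↑s : (X × Y) →L[ℝ] (X × Y)) * p = p * ↑s := by
      have : p * ↑s = ↑s * p := by
        calc p * ↑s = p * ↑u⁻¹ * ↑t := by rw [hs, Units.val_mul, mul_assoc, ← mul_assoc]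
          _ = ↑u⁻¹ * q * ↑t := by rw [hpu]
          _ = ↑u⁻¹ * (↑t * p * ↑t⁻¹ * ↑t) := by rw [hq, mul_assoc]
          _ = ↑u⁻¹ * (↑t * p) := by rw [mul_assoc (↑t * p), Units.inv_mul, mul_one]
          _ = ↑s * p := by rw [hs, Units.val_mul, mul_assoc]
      exact this.symm
    -- decompose s
    rw [hp] at hcomm
    have hd := my_decomp ((↑s : (X × Y) →L[ℝ] (X × Y))) hcomm
    have hcomm' : (↑s⁻¹ : (X × Y) →L[ℝ] (X × Y)) *
        ((ContinuousLinearMap.id ℝ X).prodMap (0 : Y →L[ℝ] Y)) =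
        ((ContinuousLinearMap.id ℝ X).prodMap (0 : Y →L[ℝ] Y)) * ↑s⁻¹ :=
      (Commute.units_inv_left (a := (ContinuousLinearMap.id ℝ X).prodMap (0 : Y →L[ℝ] Y))
        (u := s) hcomm).eq
    have hd' := my_decomp ((↑s⁻¹ : (X × Y) →L[ℝ] (X × Y))) hcomm'
    have hss : (↑s : (X × Y) →L[ℝ] (X × Y)) * ↑s⁻¹ = 1 := Units.mul_inv s
    have hss' : (↑s⁻¹ : (X × Y) →L[ℝ] (X × Y)) * ↑s = 1 := Units.inv_mul s
    rw [hd, hd'] at hss hss'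
    refine ⟨⟨_, _, my_block_x hss, my_block_x hss'⟩,
      ⟨_, _, my_block_y hss, my_block_y hss'⟩, s, hd, hts⟩
  · -- backward
    intro h t
    obtain ⟨x, y, s, hsxy, hts⟩ := h t
    set F : ((X × Y) →L[ℝ] (X × Y))ˣ → ((X × Y) →L[ℝ] (X × Y)) :=
      fun g => ↑g * p * ↑g⁻¹ with hF
    have hFcont : Continuous F :=
      (Units.continuous_val.mul continuous_const).mul Units.continuous_coe_inv
    have hFidem : ∀ g, F g * F g = F g := by
      intro g
      have h1 : F g * F g = ↑g * (p * (↑g⁻¹ * ↑g) * p) * ↑g⁻¹ := by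
        simp only [hF, mul_assoc]
      rw [h1, Units.inv_mul, mul_one, hpp]
    have hFs : F s = p := by
      have hsp : (↑s : (X × Y) →L[ℝ] (X × Y)) * p = p * ↑s := by
        rw [hsxy, hp]
        refine ContinuousLinearMap.ext fun v => ?_
        simp [ContinuousLinearMap.mul_apply, Prod.map]
      rw [hF]
      calc ↑s * p * ↑s⁻¹ = p * ↑s * ↑s⁻¹ := by rw [hsp]
        _ = p := by rw [mul_assoc, Units.mul_inv, mul_one]
    obtain ⟨γ⟩ := hts
    have hmem : ∀ τ, (γ.map hFcont) τ ∈ {r : (X × Y) →L[ℝ] (X × Y) | r * r = r} := by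
      intro τ
      simp only [Path.map_coe, Function.comp_apply, Set.mem_setOf_eq]
      exact hFidem _
    have hJ : JoinedIn {r : (X × Y) →L[ℝ] (X × Y) | r * r = r} (F t) (F s) :=
      ⟨γ.map hFcont, hmem⟩
    rw [hFs] at hJ
    exact hJ.symm
end

section
/- In the real n×n matrices, two idempotent matrices p and q are joined by a continuous path of idempotents if and only if rank p = rank q. -/
set_option maxHeartbeats 1000000

open Matrix

private lemma rank_conj {n : ℕ} (u v p : Matrix (Fin n) (Fin n) ℝ) (huv : u * v = 1) :
    (u * p * v).rank = p.rank := by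
  have hdet : u.det * v.det = 1 := by rw [← det_mul, huv, det_one]
  have hu : IsUnit u.det := IsUnit.of_mul_eq_one _ hdet
  have hv : IsUnit v.det := IsUnit.of_mul_eq_one _ (by rw [mul_comm] at hdet; exact hdet)
  rw [Matrix.rank_mul_eq_left_of_isUnit_det v (u * p) hv,
    Matrix.rank_mul_eq_right_of_isUnit_det u p hu]

private lemma rank_loc {n : ℕ} (p : Matrix (Fin n) (Fin n) ℝ) (hp : p * p = p) :
    ∃ U : Set (Matrix (Fin n) (Fin n) ℝ), IsOpen U ∧ p ∈ U ∧
      ∀ q ∈ U, q * q = q → q.rank = p.rank := by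
  refine ⟨{q | (1 - p - q + 2 * (q * p)).det ≠ 0}, ?_, ?_, ?_⟩
  · have hc : Continuous fun q : Matrix (Fin n) (Fin n) ℝ =>
        (1 - p - q + 2 * (q * p)).det := by
      exact (((continuous_const.sub continuous_id).add
        ((continuous_const.matrix_mul (continuous_id.matrix_mul continuous_const) : _))) :
        Continuous fun q : Matrix (Fin n) (Fin n) ℝ => 1 - p - q + 2 * (q * p)).matrix_det
    exact isOpen_ne.preimage hc
  · have h1 : (1 : Matrix (Fin n) (Fin n) ℝ) - p - p + 2 * (p * p) = 1 := by
      rw [hp, two_mul]; abel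
    simp [Set.mem_setOf_eq, h1]
  · intro q hqU hq
    set u : Matrix (Fin n) (Fin n) ℝ := 1 - p - q + 2 * (q * p) with hu_def
    have hu : IsUnit u.det := isUnit_iff_ne_zero.mpr hqU
    have l : u * p = q * p := by
      rw [hu_def, two_mul]
      simp only [sub_mul, add_mul, one_mul, mul_assoc, hp]
      abel
    have r : q * u = q * p := by
      rw [hu_def, two_mul]
      simp only [mul_sub, mul_add, mul_one, ← mul_assoc, hq]
      abel
    have key : u * p = q * u := l.trans r.symm
    have hq_eq : q = u * p * u⁻¹ := by
      rw [key, mul_assoc, mul_nonsing_inv _ hu, mul_one]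
    rw [hq_eq]
    exact rank_conj _ _ _ (mul_nonsing_inv _ hu)

private lemma joined_rank_eq {n : ℕ} {p q : Matrix (Fin n) (Fin n) ℝ}
    (h : JoinedIn {m : Matrix (Fin n) (Fin n) ℝ | m * m = m} p q) : p.rank = q.rank := by
  obtain ⟨γ, hγ⟩ := h
  have hlc : IsLocallyConstant fun t => (γ t).rank := by
    rw [IsLocallyConstant.iff_exists_open]
    intro t
    obtain ⟨U, hUo, hUm, hU⟩ := rank_loc (γ t) (hγ t)
    exact ⟨γ ⁻¹' U, hUo.preimage γ.continuous, hUm, fun s hs => hU _ hs (hγ s)⟩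
  have := hlc.apply_eq_of_isPreconnected isPreconnected_univ (Set.mem_univ 0) (Set.mem_univ 1)
  simpa using this

open Matrix Matrix.TransvectionStruct

private lemma joined_diag_conj {n : ℕ} (w : Fin n → ℝ) (hw : ∀ i, w i * w i = w i)
    (g g' : Matrix (Fin n) (Fin n) ℝ) (hgg' : g * g' = 1) :
    JoinedIn {m : Matrix (Fin n) (Fin n) ℝ | m * m = m}
      (g * Matrix.diagonal w * g') (Matrix.diagonal w) := by
  obtain ⟨L, L', D, hM⟩ := Matrix.Pivot.exists_list_transvec_mul_diagonal_mul_list_transvec g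
  have hdetg : IsUnit g.det := by
    apply IsUnit.of_mul_eq_one g'.det
    rw [← det_mul, hgg', det_one]
  have hD : ∀ i, D i ≠ 0 := by
    intro i hi
    have : g.det = 0 := by
      rw [hM, det_mul, det_mul, det_toMatrix_prod, det_toMatrix_prod, det_diagonal,
        Finset.prod_eq_zero (Finset.mem_univ i) hi]
      ring
    rw [this] at hdetg
    simp at hdetg
  set s : Fin n → ℝ := fun i => if D i < 0 then -1 else 1 with hs_def
  set d : ℝ → Fin n → ℝ := fun t i => (1 - t) * D i + t * s i with hd_def
  have hd : ∀ t ∈ Set.Icc (0:ℝ) 1, ∀ i, d t i ≠ 0 := by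
    rintro t ⟨ht0, ht1⟩ i
    simp only [hd_def, hs_def]
    rcases lt_or_gt_of_ne (hD i) with hDi | hDi
    · rw [if_pos hDi]
      have h1 : (1 - t) * D i ≤ 0 := mul_nonpos_of_nonneg_of_nonpos (by linarith) hDi.le
      rcases eq_or_lt_of_le ht0 with h | h
      · nlinarith
      · nlinarith
    · rw [if_neg (by linarith)]
      have h1 : 0 ≤ (1 - t) * D i := mul_nonneg (by linarith) hDi.le
      rcases eq_or_lt_of_le ht0 with h | h
      · nlinarith
      · nlinarith
  set A : ℝ → Matrix (Fin n) (Fin n) ℝ := fun t =>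
    (L.map fun ts => Matrix.transvection ts.i ts.j ((1 - t) * ts.c)).prod with hA_def
  set B : ℝ → Matrix (Fin n) (Fin n) ℝ := fun t =>
    (L'.map fun ts => Matrix.transvection ts.i ts.j ((1 - t) * ts.c)).prod with hB_def
  set h : ℝ → Matrix (Fin n) (Fin n) ℝ := fun t => A t * Matrix.diagonal (d t) * B t with hh_def
  have transv_cont : ∀ (LL : List (Matrix.TransvectionStruct (Fin n) ℝ)), Continuous fun t : ℝ =>
      (LL.map fun ts => Matrix.transvection ts.i ts.j ((1 - t) * ts.c)).prod := by
    intro LL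
    apply continuous_list_prod
    intro ts _
    have hstd : (fun t : ℝ => Matrix.transvection ts.i ts.j ((1 - t) * ts.c))
        = fun t : ℝ => (1 : Matrix (Fin n) (Fin n) ℝ)
          + ((1 - t) * ts.c) • Matrix.single ts.i ts.j (1:ℝ) := by
      funext t
      rw [Matrix.transvection, Matrix.smul_single, smul_eq_mul, mul_one]
    rw [hstd]
    exact continuous_const.add
      (((continuous_const.sub continuous_id).mul continuous_const).smul continuous_const)
  have hAc : Continuous A := transv_cont L
  have hBc : Continuous B := transv_cont L'
  have hdc : Continuous fun t => Matrix.diagonal (d t) := by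
    apply continuous_matrix
    intro i j
    by_cases hij : i = j
    · subst hij
      simp only [Matrix.diagonal_apply_eq, hd_def]
      exact ((continuous_const.sub continuous_id).mul continuous_const).add
        (continuous_id.mul continuous_const)
    · simp only [Matrix.diagonal_apply_ne _ hij]
      exact continuous_const
  have hhc : Continuous h := (hAc.matrix_mul hdc).matrix_mul hBc
  have hfun0 : (fun ts : Matrix.TransvectionStruct (Fin n) ℝ =>
      Matrix.transvection ts.i ts.j ((1 - (0:ℝ)) * ts.c)) = toMatrix := by
    funext ts
    cases ts with
    | mk i j hij c => rw [toMatrix_mk]; norm_num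
  have hdetA : ∀ t, (A t).det = 1 := by
    intro t
    have : A t = ((L.map fun ts : Matrix.TransvectionStruct (Fin n) ℝ =>
        (⟨ts.i, ts.j, ts.hij, (1 - t) * ts.c⟩ : Matrix.TransvectionStruct (Fin n) ℝ)).map
          toMatrix).prod := by
      simp [hA_def, List.map_map, Function.comp_def, toMatrix_mk]
    rw [this, det_toMatrix_prod]
  have hdetB : ∀ t, (B t).det = 1 := by
    intro t
    have : B t = ((L'.map fun ts : Matrix.TransvectionStruct (Fin n) ℝ =>
        (⟨ts.i, ts.j, ts.hij, (1 - t) * ts.c⟩ : Matrix.TransvectionStruct (Fin n) ℝ)).map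
          toMatrix).prod := by
      simp [hB_def, List.map_map, Function.comp_def, toMatrix_mk]
    rw [this, det_toMatrix_prod]
  have hdeth : ∀ t ∈ Set.Icc (0:ℝ) 1, (h t).det ≠ 0 := by
    intro t ht
    rw [hh_def]
    simp only [det_mul, det_diagonal, hdetA, hdetB, one_mul, mul_one]
    exact Finset.prod_ne_zero_iff.mpr fun i _ => hd t ht i
  set γf : ℝ → Matrix (Fin n) (Fin n) ℝ :=
    fun t => h t * Matrix.diagonal w * (h t)⁻¹ with hγ_def
  have hγcont : ContinuousOn γf (Set.Icc 0 1) := by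
    have heq : ∀ t ∈ Set.Icc (0:ℝ) 1,
        γf t = h t * Matrix.diagonal w * (((h t).det)⁻¹ • (h t).adjugate) := by
      intro t ht
      show h t * Matrix.diagonal w * (h t)⁻¹ = _
      congr 1
      rw [Matrix.inv_def, Ring.inverse_eq_inv]
    refine ContinuousOn.congr ?_ heq
    exact ContinuousOn.mul ((hhc.matrix_mul continuous_const).continuousOn)
      (ContinuousOn.smul ((hhc.matrix_det.continuousOn).inv₀ hdeth)
        hhc.matrix_adjugate.continuousOn)
  have hww : Matrix.diagonal w * Matrix.diagonal w = Matrix.diagonal w := by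
    rw [diagonal_mul_diagonal]
    exact congrArg _ (funext hw)
  have key : ∀ (M N : Matrix (Fin n) (Fin n) ℝ), N * M = 1 →
      (M * Matrix.diagonal w * N) * (M * Matrix.diagonal w * N) = M * Matrix.diagonal w * N := by
    intro M N hNM
    calc (M * Matrix.diagonal w * N) * (M * Matrix.diagonal w * N)
        = M * (Matrix.diagonal w * ((N * M) * (Matrix.diagonal w * N))) := by
          simp only [Matrix.mul_assoc]
      _ = M * (Matrix.diagonal w * (Matrix.diagonal w * N)) := by rw [hNM, Matrix.one_mul]
      _ = M * ((Matrix.diagonal w * Matrix.diagonal w) * N) :=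
          congrArg _ (Matrix.mul_assoc _ _ _).symm
      _ = M * Matrix.diagonal w * N := by rw [hww, Matrix.mul_assoc]
  have hmem : ∀ t ∈ Set.Icc (0:ℝ) 1, γf t * γf t = γf t := by
    intro t ht
    have hinv : (h t)⁻¹ * h t = 1 := nonsing_inv_mul _ (isUnit_iff_ne_zero.mpr (hdeth t ht))
    exact key (h t) ((h t)⁻¹) hinv
  have hd0 : d 0 = D := by funext i; simp [hd_def]
  have hend0 : γf 0 = g * Matrix.diagonal w * g' := by
    have hA0 : h 0 = g := by
      simp only [hh_def, hA_def, hB_def, hd0, hfun0]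
      exact hM.symm
    show h 0 * Matrix.diagonal w * (h 0)⁻¹ = _
    rw [hA0, Matrix.inv_eq_right_inv hgg']
  have hend1 : γf 1 = Matrix.diagonal w := by
    have hprod1 : ∀ (LL : List (Matrix.TransvectionStruct (Fin n) ℝ)),
        (LL.map fun ts => Matrix.transvection ts.i ts.j ((1 - (1:ℝ)) * ts.c)).prod = 1 := by
      intro LL
      apply List.prod_eq_one
      intro x hx
      obtain ⟨ts, _, rfl⟩ := List.mem_map.mp hx
      norm_num [Matrix.transvection_zero]
    have hh1 : h 1 = Matrix.diagonal s := by
      simp only [hh_def, hA_def, hB_def, hprod1, Matrix.one_mul, Matrix.mul_one]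
      congr 1
      funext i
      simp [hd_def]
    have hsne : ∀ i, s i ≠ 0 := by
      intro i
      by_cases hDi : D i < 0 <;> simp [hs_def, hDi]
    have hinv_s : (Matrix.diagonal s)⁻¹ = Matrix.diagonal (fun i => (s i)⁻¹) := by
      apply Matrix.inv_eq_right_inv
      rw [diagonal_mul_diagonal]
      have : (fun i => s i * (s i)⁻¹) = fun _ => (1:ℝ) :=
        funext fun i => mul_inv_cancel₀ (hsne i)
      rw [this, diagonal_one]
    show h 1 * Matrix.diagonal w * (h 1)⁻¹ = _
    rw [hh1, hinv_s, diagonal_mul_diagonal, diagonal_mul_diagonal]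
    apply congrArg Matrix.diagonal
    funext i
    show s i * w i * (s i)⁻¹ = w i
    rw [mul_comm (s i) (w i), mul_assoc, mul_inv_cancel₀ (hsne i), mul_one]
  refine ⟨⟨⟨fun t : unitInterval => γf t, ?_⟩, ?_, ?_⟩, ?_⟩
  · exact hγcont.comp_continuous continuous_subtype_val fun t => t.2
  · simpa using hend0
  · simpa using hend1
  · intro t
    exact hmem t t.2

open Matrix

private lemma idem_similar {n : ℕ} (p : Matrix (Fin n) (Fin n) ℝ) (hp : p * p = p) :
    ∃ g g' : Matrix (Fin n) (Fin n) ℝ, g * g' = 1 ∧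
      p = g * Matrix.diagonal (fun i : Fin n => if (i : ℕ) < p.rank then (1:ℝ) else 0) * g' := by
  set f : (Fin n → ℝ) →ₗ[ℝ] (Fin n → ℝ) := Matrix.toLin' p with hf_def
  have hff : f ∘ₗ f = f := by rw [hf_def, ← Matrix.toLin'_mul, hp]
  have hffx : ∀ x, f (f x) = f x := fun x => by
    conv_rhs => rw [← hff]
    rfl
  have hproj : ∀ x : LinearMap.range f, f.rangeRestrict ↑x = x := by
    rintro ⟨x, y, rfl⟩
    apply Subtype.ext
    show f (f y) = f y
    exact hffx y
  have hcompl : IsCompl (LinearMap.range f) (LinearMap.ker f) := by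
    have := LinearMap.isCompl_of_proj hproj
    rwa [LinearMap.ker_rangeRestrict] at this
  set r1 := Module.finrank ℝ (LinearMap.range f) with hr1_def
  set r2 := Module.finrank ℝ (LinearMap.ker f) with hr2_def
  have hsum : r1 + r2 = n := by
    have := LinearMap.finrank_range_add_finrank_ker f
    rwa [Module.finrank_fin_fun] at this
  have hrank : p.rank = r1 := by rw [Matrix.rank]; congr 1
  set bR := Module.finBasis ℝ (LinearMap.range f) with hbR_def
  set bK := Module.finBasis ℝ (LinearMap.ker f) with hbK_def
  set b0 : Module.Basis (Fin r1 ⊕ Fin r2) ℝ (Fin n → ℝ) :=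
    (bR.prod bK).map (Submodule.prodEquivOfIsCompl _ _ hcompl) with hb0_def
  have hb0l : ∀ k : Fin r1, b0 (Sum.inl k) = ↑(bR k) := by
    intro k
    rw [hb0_def, Module.Basis.map_apply, Module.Basis.prod_apply]
    simp [Submodule.coe_prodEquivOfIsCompl']
  have hb0r : ∀ k : Fin r2, b0 (Sum.inr k) = ↑(bK k) := by
    intro k
    rw [hb0_def, Module.Basis.map_apply, Module.Basis.prod_apply]
    simp [Submodule.coe_prodEquivOfIsCompl']
  have hfl : ∀ k : Fin r1, f (b0 (Sum.inl k)) = b0 (Sum.inl k) := by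
    intro k
    rw [hb0l]
    obtain ⟨y, hy⟩ := (bR k).2
    rw [← hy]
    exact hffx y
  have hfr : ∀ k : Fin r2, f (b0 (Sum.inr k)) = 0 := by
    intro k
    rw [hb0r]
    exact (bK k).2
  set e : (Fin r1 ⊕ Fin r2) ≃ Fin n := finSumFinEquiv.trans (finCongr hsum) with he_def
  set b : Module.Basis (Fin n) ℝ (Fin n → ℝ) := b0.reindex e with hb_def
  set w : Fin n → ℝ := fun i : Fin n => if (i : ℕ) < r1 then (1:ℝ) else 0 with hw_def
  have hmat : LinearMap.toMatrix b b f = Matrix.diagonal w := by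
    ext i j
    rw [LinearMap.toMatrix_apply]
    rcases hsj : e.symm j with k | k
    · have hje : j = e (Sum.inl k) := by rw [← hsj, Equiv.apply_symm_apply]
      have hjr : (j : ℕ) < r1 := by
        rw [hje, he_def]
        simp [finSumFinEquiv_apply_left]
      have hfb : f (b j) = b j := by
        rw [hb_def, Module.Basis.reindex_apply, hsj, hfl]
      rw [hfb, Module.Basis.repr_self, Finsupp.single_apply, Matrix.diagonal_apply]
      rcases eq_or_ne i j with rfl | hij
      · simp [hw_def, hjr]
      · simp [hij, Ne.symm hij]
    · have hje : j = e (Sum.inr k) := by rw [← hsj, Equiv.apply_symm_apply]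
      have hjr : ¬ (j : ℕ) < r1 := by
        rw [hje, he_def]
        simp [finSumFinEquiv_apply_right]
      have hfb : f (b j) = 0 := by
        rw [hb_def, Module.Basis.reindex_apply, hsj, hfr]
      rw [hfb, Matrix.diagonal_apply]
      rcases eq_or_ne i j with rfl | hij
      · simp [hw_def, hjr]
      · simp [hij]
  set bstd := Pi.basisFun ℝ (Fin n) with hbstd_def
  have hp_mat : LinearMap.toMatrix bstd bstd f = p := by
    rw [hf_def, ← Matrix.toLin_eq_toLin', LinearMap.toMatrix_toLin]
  refine ⟨bstd.toMatrix b, b.toMatrix bstd, Module.Basis.toMatrix_mul_toMatrix_flip bstd b, ?_⟩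
  have := basis_toMatrix_mul_linearMap_toMatrix_mul_basis_toMatrix bstd b bstd b f
  rw [hmat, hp_mat] at this
  rw [hrank]
  exact this.symm

theorem stmt9 {n : ℕ} (p q : Matrix (Fin n) (Fin n) ℝ)
    (hp : p * p = p) (hq : q * q = q) :
    JoinedIn {m : Matrix (Fin n) (Fin n) ℝ | m * m = m} p q ↔ p.rank = q.rank := by
  constructor
  · exact joined_rank_eq
  · intro hr
    obtain ⟨g, g', hgg', hpe⟩ := idem_similar p hp
    obtain ⟨k, k', hkk', hqe⟩ := idem_similar q hq
    set w : Fin n → ℝ := fun i : Fin n => if (i : ℕ) < p.rank then (1:ℝ) else 0 with hw_def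
    have hw : ∀ i, w i * w i = w i := by
      intro i
      rw [hw_def]
      by_cases h : (i : ℕ) < p.rank <;> simp [h]
    have h1 : JoinedIn {m : Matrix (Fin n) (Fin n) ℝ | m * m = m} p (Matrix.diagonal w) := by
      rw [hpe]
      exact joined_diag_conj w hw g g' hgg'
    have h2 : JoinedIn {m : Matrix (Fin n) (Fin n) ℝ | m * m = m} q (Matrix.diagonal w) := by
      rw [hqe, ← hr]
      exact joined_diag_conj w hw k k' hkk'
    exact h1.trans h2.symm
end

section
/- Let A be a unital Banach algebra and p, q idempotents. If there exist units u, v ∈ Aˣ with u·p·u⁻¹ = q such that u and v lie in the same path component of Aˣ and v commutes with p, then p and q lie in the same path component of the idempotents of A. -/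
theorem stmt14 {A : Type*} [NormedRing A] [NormedAlgebra ℝ A] [CompleteSpace A]
    (p q : A) (hp : p * p = p) (hq : q * q = q)
    (u v : Aˣ) (huq : (u : A) * p * (↑u⁻¹ : A) = q)
    (huv : Joined u v) (hv : Commute (v : A) p) :
    JoinedIn {x : A | x * x = x} p q := by
  obtain ⟨γ⟩ := huv
  have hcont : Continuous fun t : unitInterval => (γ t : A) * p * (↑(γ t)⁻¹ : A) := by
    have h1 : Continuous fun t : unitInterval => (γ t : A) :=
      Units.continuous_val.comp γ.continuous
    have h2 : Continuous fun t : unitInterval => (↑(γ t)⁻¹ : A) :=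
      Units.continuous_coe_inv.comp γ.continuous
    exact (h1.mul continuous_const).mul h2
  have hmem : ∀ t : unitInterval,
      ((γ t : A) * p * (↑(γ t)⁻¹ : A)) ∈ {x : A | x * x = x} := by
    intro t
    show ((γ t : A) * p * (↑(γ t)⁻¹ : A)) * ((γ t : A) * p * (↑(γ t)⁻¹ : A))
        = (γ t : A) * p * (↑(γ t)⁻¹ : A)
    have : (↑(γ t)⁻¹ : A) * (γ t : A) = 1 := Units.inv_mul _
    calc ((γ t : A) * p * (↑(γ t)⁻¹ : A)) * ((γ t : A) * p * (↑(γ t)⁻¹ : A))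
        = (γ t : A) * p * ((↑(γ t)⁻¹ : A) * (γ t : A)) * p * (↑(γ t)⁻¹ : A) := by noncomm_ring
      _ = (γ t : A) * (p * p) * (↑(γ t)⁻¹ : A) := by rw [this]; noncomm_ring
      _ = (γ t : A) * p * (↑(γ t)⁻¹ : A) := by rw [hp]
  refine JoinedIn.symm ⟨⟨⟨fun t => (γ t : A) * p * (↑(γ t)⁻¹ : A), hcont⟩, ?_, ?_⟩, hmem⟩
  · show (γ 0 : A) * p * (↑(γ 0)⁻¹ : A) = q
    rw [γ.source]; exact huq
  · show (γ 1 : A) * p * (↑(γ 1)⁻¹ : A) = p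
    rw [γ.target, hv.eq, mul_assoc, Units.mul_inv, mul_one]
end

section
/- Suppose E = X ⊕ Y is a Banach space where GL(X) and GL(Y) are both path connected but GL(E) is not path connected. Then there exists an invertible t ∈ GL(E) such that the projection q = t·p·t⁻¹ (where p is the projection onto X along Y) is conjugate to p but not joined to p by any continuous path of idempotents. -/
open ContinuousLinearMap

section Aux

variable {A : Type*} [NormedRing A] [NormedAlgebra ℝ A] [CompleteSpace A]

lemma my_joined_map {α β : Type*} [TopologicalSpace α] [TopologicalSpace β] {a b : α}
    (h : Joined a b) {f : α → β} (hf : Continuous f) : Joined (f a) (f b) :=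
  ⟨h.somePath.map hf⟩

lemma my_joined_prod {α β : Type*} [TopologicalSpace α] [TopologicalSpace β]
    {a b : α} {c d : β} (h1 : Joined a b) (h2 : Joined c d) : Joined (a, c) (b, d) :=
  ⟨h1.somePath.prod h2.somePath⟩

lemma my_units_continuous {Z : Type*} [TopologicalSpace Z] {f : Z → Aˣ}
    (h : Continuous fun z => (f z : A)) : Continuous f :=
  Units.isOpenEmbedding_val.isEmbedding.continuous_iff.mpr h

/-- Nearby idempotents are conjugate by a unit joined to 1. -/
lemma conj_near {e f : A} (he : e * e = e) (hf : f * f = f)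
    (h : ‖e - f‖ * (‖e‖ + ‖f‖) < 1) :
    ∃ v : Aˣ, Joined 1 v ∧ (v : A) * f * (↑v⁻¹ : A) = e := by
  set w : A := e * f + (1 - e) * (1 - f) with hw
  have hkey : 1 - w = -(e * (f - e) + (e - f) * f) := by
    have h2 : e * (f - e) + (e - f) * f = e * f - e * e + (e * f - f * f) := by noncomm_ring
    rw [h2, he, hf, hw]; noncomm_ring
  have hnorm : ‖1 - w‖ < 1 := by
    rw [hkey, norm_neg]
    calc ‖e * (f - e) + (e - f) * f‖ ≤ ‖e * (f - e)‖ + ‖(e - f) * f‖ := norm_add_le _ _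
      _ ≤ ‖e‖ * ‖f - e‖ + ‖e - f‖ * ‖f‖ := add_le_add (norm_mul_le _ _) (norm_mul_le _ _)
      _ = ‖e - f‖ * (‖e‖ + ‖f‖) := by rw [norm_sub_rev f e]; ring
      _ < 1 := h
  have hbound : ∀ s : unitInterval, ‖(s : ℝ) • (1 - w)‖ < 1 := by
    intro s
    rw [norm_smul]
    calc ‖(s : ℝ)‖ * ‖1 - w‖ ≤ 1 * ‖1 - w‖ := by
          apply mul_le_mul_of_nonneg_right _ (norm_nonneg _)
          rw [Real.norm_eq_abs, abs_of_nonneg s.2.1]; exact s.2.2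
      _ = ‖1 - w‖ := one_mul _
      _ < 1 := hnorm
  refine ⟨Units.oneSub (1 - w) hnorm, ?_, ?_⟩
  · refine ⟨{ toFun := fun s => Units.oneSub ((s : ℝ) • (1 - w)) (hbound s)
              continuous_toFun := ?_
              source' := ?_
              target' := ?_ }⟩
    · apply my_units_continuous
      simp only [Units.val_oneSub]
      exact continuous_const.sub ((continuous_subtype_val.smul continuous_const))
    · ext; simp [Units.val_oneSub]
    · ext; simp [Units.val_oneSub]
  · have hwf : w * f = e * w := by
      have h1 : (1 - f) * f = 0 := by
        have : (1 - f) * f = f - f * f := by noncomm_ring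
        rw [this, hf, sub_self]
      have h2 : e * (1 - e) = 0 := by
        have : e * (1 - e) = e - e * e := by noncomm_ring
        rw [this, he, sub_self]
      have l : w * f = e * f := by
        rw [hw]
        calc (e * f + (1 - e) * (1 - f)) * f = e * (f * f) + (1 - e) * ((1 - f) * f) := by noncomm_ring
          _ = e * f := by rw [hf, h1, mul_zero, add_zero]
      have r : e * w = e * f := by
        rw [hw]
        calc e * (e * f + (1 - e) * (1 - f)) = (e * e) * f + (e * (1 - e)) * (1 - f) := by noncomm_ring
          _ = e * f := by rw [he, h2, zero_mul, add_zero]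
      rw [l, r]
    have hv : (Units.oneSub (1 - w) hnorm : A) = w := by
      simp [Units.val_oneSub]
    have hwf' : ((Units.oneSub (1 - w) hnorm : Aˣ) : A) * f
        = e * ((Units.oneSub (1 - w) hnorm : Aˣ) : A) := by rw [hv]; exact hwf
    rw [hwf', mul_assoc, Units.mul_inv, mul_one]

/-- If two idempotents are joined by a path of idempotents then they are conjugate
by a unit joined to 1. -/
lemma joined_units_of_joinedIn_idem {e f : A}
    (h : JoinedIn {r : A | r * r = r} e f) :
    ∃ w : Aˣ, Joined 1 w ∧ (w : A) * f * (↑w⁻¹ : A) = e := by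
  obtain ⟨γ, hγ⟩ := h
  -- bound on the norm along the path
  obtain ⟨s₀, -, hs₀⟩ := isCompact_univ.exists_isMaxOn (Set.univ_nonempty)
    (continuous_norm.comp γ.continuous).continuousOn
  set M : ℝ := ‖γ s₀‖ with hM
  have hM0 : 0 ≤ M := norm_nonneg _
  have hMb : ∀ s, ‖γ s‖ ≤ M := fun s => hs₀ (Set.mem_univ s)
  have hMpos : (0:ℝ) < 2 * M + 1 := by linarith
  -- uniform continuity
  have huc : UniformContinuous γ := CompactSpace.uniformContinuous_of_continuous γ.continuous
  obtain ⟨δ, hδ, hδ'⟩ := Metric.uniformContinuous_iff.mp huc (1 / (2 * M + 1))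
    (by positivity)
  -- key: points at distance < δ have equivalent conjugacy classes
  have hsmall : ∀ s s' : unitInterval, dist s s' < δ →
      ‖γ s - γ s'‖ * (‖γ s‖ + ‖γ s'‖) < 1 := by
    intro s s' hss
    have h1 : dist (γ s) (γ s') < 1 / (2 * M + 1) := hδ' hss
    rw [dist_eq_norm] at h1
    calc ‖γ s - γ s'‖ * (‖γ s‖ + ‖γ s'‖) ≤ ‖γ s - γ s'‖ * (2 * M + 1) := by
          apply mul_le_mul_of_nonneg_left _ (norm_nonneg _)
          have := hMb s; have := hMb s'; linarith
      _ < (1 / (2 * M + 1)) * (2 * M + 1) := by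
          exact mul_lt_mul_of_pos_right h1 hMpos
      _ = 1 := by field_simp
  set S : Set unitInterval :=
    {s | ∃ w : Aˣ, Joined 1 w ∧ (w : A) * γ s * (↑w⁻¹ : A) = γ 0} with hS
  have hstep : ∀ s s' : unitInterval, dist s s' < δ → s ∈ S → s' ∈ S := by
    intro s s' hss ⟨w, hw, hconj⟩
    obtain ⟨v, hv, hvconj⟩ := conj_near (hγ s) (hγ s') (hsmall s s' hss)
    refine ⟨w * v, ?_, ?_⟩
    · have h2 : Joined w (w * v) := by
        have := my_joined_map hv (continuous_mul_left w)
        simpa using this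
      exact ((by simpa using hw) : Joined 1 w).trans h2
    · have : ((w * v : Aˣ) : A) * γ s' * (↑(w * v)⁻¹ : A)
          = (w : A) * ((v : A) * γ s' * (↑v⁻¹ : A)) * (↑w⁻¹ : A) := by
        rw [mul_inv_rev]
        push_cast
        noncomm_ring
      rw [this, hvconj, hconj]
  have hclopen : IsClopen S := by
    constructor
    · rw [← isOpen_compl_iff]
      rw [Metric.isOpen_iff]
      intro s hs
      refine ⟨δ, hδ, fun s' hs' => ?_⟩
      intro hs'S
      exact hs (hstep s' s (Metric.mem_ball.mp hs') hs'S)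
    · rw [Metric.isOpen_iff]
      intro s hs
      exact ⟨δ, hδ, fun s' hs' => hstep s s'
        (by rw [dist_comm]; exact Metric.mem_ball.mp hs') hs⟩
  have h0 : (0 : unitInterval) ∈ S := by
    refine ⟨1, Joined.refl 1, ?_⟩
    simp
  have : S = Set.univ := (isClopen_iff.mp hclopen).resolve_left (by
    intro hemp; rw [hemp] at h0; exact h0)
  have h1 : (1 : unitInterval) ∈ S := this ▸ Set.mem_univ _
  obtain ⟨w, hw, hconj⟩ := h1
  refine ⟨w, hw, ?_⟩
  rw [γ.target, γ.source] at hconj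
  exact hconj

end Aux

section Block

variable {X Y : Type*} [NormedAddCommGroup X] [NormedSpace ℝ X] [CompleteSpace X]
  [NormedAddCommGroup Y] [NormedSpace ℝ Y] [CompleteSpace Y]

lemma my_prodMap_mul (a a' : X →L[ℝ] X) (d d' : Y →L[ℝ] Y) :
    (a.prodMap d) * (a'.prodMap d') = (a * a').prodMap (d * d') := by
  ext z <;> simp [mul_apply]

/-- A unit commuting with the projection onto the first factor is joined to 1. -/
lemma joined_one_of_commute
    (hX : PathConnectedSpace (X →L[ℝ] X)ˣ)
    (hY : PathConnectedSpace (Y →L[ℝ] Y)ˣ)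
    (c : ((X × Y) →L[ℝ] (X × Y))ˣ)
    (hc : (c : (X × Y) →L[ℝ] (X × Y)) * ((ContinuousLinearMap.id ℝ X).prodMap (0 : Y →L[ℝ] Y))
        = ((ContinuousLinearMap.id ℝ X).prodMap (0 : Y →L[ℝ] Y)) * (c : (X × Y) →L[ℝ] (X × Y))) :
    Joined 1 c := by
  set p : (X × Y) →L[ℝ] (X × Y) := (ContinuousLinearMap.id ℝ X).prodMap (0 : Y →L[ℝ] Y) with hpdef
  have hp_apply : ∀ z : X × Y, p z = (z.1, 0) := by
    intro z; rw [hpdef]; rfl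
  have hc' : (↑c⁻¹ : (X × Y) →L[ℝ] (X × Y)) * p = p * (↑c⁻¹ : (X × Y) →L[ℝ] (X × Y)) := by
    calc (↑c⁻¹ : (X × Y) →L[ℝ] (X × Y)) * p
        = ↑c⁻¹ * (p * ↑c * ↑c⁻¹) := by rw [mul_assoc, Units.mul_inv, mul_one]
      _ = ↑c⁻¹ * (↑c * p * ↑c⁻¹) := by rw [hc]
      _ = p * ↑c⁻¹ := by rw [← mul_assoc, ← mul_assoc, Units.inv_mul, one_mul]
  -- componentwise facts
  have key : ∀ (u : (X × Y) →L[ℝ] (X × Y)), u * p = p * u →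
      (∀ x : X, u (x, 0) = ((u (x, 0)).1, 0)) ∧ (∀ y : Y, u (0, y) = (0, (u (0, y)).2)) := by
    intro u hu
    constructor
    · intro x
      have h := DFunLike.congr_fun hu (x, (0 : Y))
      simp only [ContinuousLinearMap.mul_apply, hp_apply] at h
      exact h
    · intro y
      have h := DFunLike.congr_fun hu ((0 : X), y)
      simp only [ContinuousLinearMap.mul_apply, hp_apply] at h
      have h0 : u ((0:X), (0:Y)) = 0 := by
        have e0 : ((0:X), (0:Y)) = (0 : X × Y) := rfl
        rw [e0, map_zero]
      rw [h0] at h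
      have hfst : (u (0, y)).1 = 0 := by
        have h2 := congrArg Prod.fst h
        simpa using h2.symm
      exact Prod.ext hfst rfl
  obtain ⟨hcX, hcY⟩ := key c (by exact_mod_cast hc)
  obtain ⟨hcX', hcY'⟩ := key ↑c⁻¹ (by exact_mod_cast hc')
  -- block components
  set a : X →L[ℝ] X := (fst ℝ X Y).comp (((c : (X × Y) →L[ℝ] (X × Y))).comp (inl ℝ X Y)) with ha
  set a' : X →L[ℝ] X := (fst ℝ X Y).comp (((↑c⁻¹ : (X × Y) →L[ℝ] (X × Y))).comp (inl ℝ X Y))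
    with ha'
  set d : Y →L[ℝ] Y := (snd ℝ X Y).comp (((c : (X × Y) →L[ℝ] (X × Y))).comp (inr ℝ X Y)) with hd
  set d' : Y →L[ℝ] Y := (snd ℝ X Y).comp (((↑c⁻¹ : (X × Y) →L[ℝ] (X × Y))).comp (inr ℝ X Y))
    with hd'
  have haap : ∀ x : X, (c : (X × Y) →L[ℝ] (X × Y)) (x, 0) = (a x, 0) := by
    intro x
    rw [hcX x]
    simp [ha]
  have haap' : ∀ x : X, (↑c⁻¹ : (X × Y) →L[ℝ] (X × Y)) (x, 0) = (a' x, 0) := by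
    intro x
    rw [hcX' x]
    simp [ha']
  have hdap : ∀ y : Y, (c : (X × Y) →L[ℝ] (X × Y)) (0, y) = (0, d y) := by
    intro y
    rw [hcY y]
    simp [hd]
  have hdap' : ∀ y : Y, (↑c⁻¹ : (X × Y) →L[ℝ] (X × Y)) (0, y) = (0, d' y) := by
    intro y
    rw [hcY' y]
    simp [hd']
  have hcc' : ∀ z : X × Y, (c : (X × Y) →L[ℝ] (X × Y)) ((↑c⁻¹ : (X × Y) →L[ℝ] (X × Y)) z) = z := by
    intro z
    rw [← ContinuousLinearMap.mul_apply, Units.mul_inv, ContinuousLinearMap.one_apply]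
  have hc'c : ∀ z : X × Y, (↑c⁻¹ : (X × Y) →L[ℝ] (X × Y)) ((c : (X × Y) →L[ℝ] (X × Y)) z) = z := by
    intro z
    rw [← ContinuousLinearMap.mul_apply, Units.inv_mul, ContinuousLinearMap.one_apply]
  have haa' : a * a' = 1 := by
    ext x
    have : (c : (X × Y) →L[ℝ] (X × Y)) ((a' x, 0)) = (x, 0) := by
      rw [← haap' x, hcc']
    have h2 := congrArg Prod.fst (haap (a' x))
    rw [this] at h2
    simpa [mul_apply] using h2.symm
  have ha'a : a' * a = 1 := by
    ext x
    have : (↑c⁻¹ : (X × Y) →L[ℝ] (X × Y)) ((a x, 0)) = (x, 0) := by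
      rw [← haap x, hc'c]
    have h2 := congrArg Prod.fst (haap' (a x))
    rw [this] at h2
    simpa [mul_apply] using h2.symm
  have hdd' : d * d' = 1 := by
    ext y
    have : (c : (X × Y) →L[ℝ] (X × Y)) ((0, d' y)) = (0, y) := by
      rw [← hdap' y, hcc']
    have h2 := congrArg Prod.snd (hdap (d' y))
    rw [this] at h2
    simpa [mul_apply] using h2.symm
  have hd'd : d' * d = 1 := by
    ext y
    have : (↑c⁻¹ : (X × Y) →L[ℝ] (X × Y)) ((0, d y)) = (0, y) := by
      rw [← hdap y, hc'c]
    have h2 := congrArg Prod.snd (hdap' (d y))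
    rw [this] at h2
    simpa [mul_apply] using h2.symm
  set au : (X →L[ℝ] X)ˣ := ⟨a, a', haa', ha'a⟩ with hau
  set du : (Y →L[ℝ] Y)ˣ := ⟨d, d', hdd', hd'd⟩ with hdu
  -- c = a.prodMap d
  have hcval : (c : (X × Y) →L[ℝ] (X × Y)) = a.prodMap d := by
    apply ContinuousLinearMap.ext
    intro z
    have hz : z = ((z.1, 0) : X × Y) + ((0, z.2) : X × Y) := by
      apply Prod.ext <;> simp
    calc (c : (X × Y) →L[ℝ] (X × Y)) z
        = (c : (X × Y) →L[ℝ] (X × Y)) (((z.1, 0) : X × Y) + ((0, z.2) : X × Y)) := by rw [← hz]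
      _ = (c : (X × Y) →L[ℝ] (X × Y)) (z.1, 0) + (c : (X × Y) →L[ℝ] (X × Y)) (0, z.2) :=
          map_add _ _ _
      _ = (a z.1, (0:Y)) + ((0:X), d z.2) := by rw [haap, hdap]
      _ = (a z.1, d z.2) := by apply Prod.ext <;> simp
      _ = (a.prodMap d) z := rfl
  -- The map from pairs of units to units of E
  set F : (X →L[ℝ] X)ˣ × (Y →L[ℝ] Y)ˣ → ((X × Y) →L[ℝ] (X × Y))ˣ :=
    fun u => ⟨(u.1 : X →L[ℝ] X).prodMap (u.2 : Y →L[ℝ] Y),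
              (↑u.1⁻¹ : X →L[ℝ] X).prodMap (↑u.2⁻¹ : Y →L[ℝ] Y),
              by rw [my_prodMap_mul, Units.mul_inv, Units.mul_inv]; ext z <;> simp,
              by rw [my_prodMap_mul, Units.inv_mul, Units.inv_mul]; ext z <;> simp⟩ with hF
  have hFcont : Continuous F := by
    apply my_units_continuous
    have : (fun u : (X →L[ℝ] X)ˣ × (Y →L[ℝ] Y)ˣ => ((F u : (X × Y) →L[ℝ] (X × Y))))
        = fun u => prodMapL ℝ X X Y Y ((u.1 : X →L[ℝ] X), (u.2 : Y →L[ℝ] Y)) := by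
      funext u
      simp [hF, prodMapL_apply]
    rw [this]
    exact (prodMapL ℝ X X Y Y).continuous.comp
      ((Units.continuous_val.comp continuous_fst).prodMk
        (Units.continuous_val.comp continuous_snd))
  have hF1 : F (1, 1) = 1 := by
    apply Units.ext
    ext z <;> simp [hF]
  have hFc : F (au, du) = c := by
    apply Units.ext
    simp only [hF]
    exact hcval.symm
  have hj : Joined ((1 : (X →L[ℝ] X)ˣ), (1 : (Y →L[ℝ] Y)ˣ)) (au, du) :=
    my_joined_prod (hX.joined 1 au) (hY.joined 1 du)
  have := my_joined_map hj hFcont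
  rwa [hF1, hFc] at this

end Block

theorem stmt17 {X Y : Type*} [NormedAddCommGroup X] [NormedSpace ℝ X] [CompleteSpace X]
    [NormedAddCommGroup Y] [NormedSpace ℝ Y] [CompleteSpace Y]
    (p : (X × Y) →L[ℝ] (X × Y))
    (hp : p = (ContinuousLinearMap.id ℝ X).prodMap (0 : Y →L[ℝ] Y))
    (hX : PathConnectedSpace (X →L[ℝ] X)ˣ)
    (hY : PathConnectedSpace (Y →L[ℝ] Y)ˣ)
    (hE : ¬ PathConnectedSpace ((X × Y) →L[ℝ] (X × Y))ˣ) :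
    ∃ t : ((X × Y) →L[ℝ] (X × Y))ˣ,
      ¬ JoinedIn {r : (X × Y) →L[ℝ] (X × Y) | r * r = r} p
          ((t : (X × Y) →L[ℝ] (X × Y)) * p * (↑t⁻¹ : (X × Y) →L[ℝ] (X × Y))) := by
  by_contra hcon
  push_neg at hcon
  apply hE
  have key : ∀ t : ((X × Y) →L[ℝ] (X × Y))ˣ, Joined 1 t := by
    intro t
    obtain ⟨w, hw, hconj⟩ := joined_units_of_joinedIn_idem (hcon t)
    -- (w * t) commutes with p
    set c : ((X × Y) →L[ℝ] (X × Y))ˣ := w * t with hcdef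
    have hcomm : (c : (X × Y) →L[ℝ] (X × Y)) * p = p * (c : (X × Y) →L[ℝ] (X × Y)) := by
      have h1 : (c : (X × Y) →L[ℝ] (X × Y)) * p * (↑c⁻¹ : (X × Y) →L[ℝ] (X × Y)) = p := by
        rw [hcdef]
        push_cast [mul_inv_rev]
        calc (w : (X × Y) →L[ℝ] (X × Y)) * ↑t * p * ((↑t⁻¹ : (X × Y) →L[ℝ] (X × Y)) * ↑w⁻¹)
            = (w : (X × Y) →L[ℝ] (X × Y)) * (↑t * p * ↑t⁻¹) * ↑w⁻¹ := by noncomm_ring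
          _ = p := hconj
      calc (c : (X × Y) →L[ℝ] (X × Y)) * p
          = ((c : (X × Y) →L[ℝ] (X × Y)) * p * ↑c⁻¹) * ↑c := by
            rw [mul_assoc, Units.inv_mul, mul_one]
        _ = p * ↑c := by rw [h1]
    have hjc : Joined (1 : ((X × Y) →L[ℝ] (X × Y))ˣ) c := by
      apply joined_one_of_commute hX hY
      rw [← hp]; exact hcomm
    have hjw : Joined (1 : ((X × Y) →L[ℝ] (X × Y))ˣ) w⁻¹ := by
      have := my_joined_map hw (continuous_inv (G := ((X × Y) →L[ℝ] (X × Y))ˣ))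
      simpa using this
    have hjt : Joined (1 : ((X × Y) →L[ℝ] (X × Y))ˣ) (w⁻¹ * c) := by
      have := my_joined_map (my_joined_prod hjw hjc)
        (continuous_mul (M := ((X × Y) →L[ℝ] (X × Y))ˣ))
      simpa using this
    have : w⁻¹ * c = t := by rw [hcdef, ← mul_assoc, inv_mul_cancel, one_mul]
    rwa [this] at hjt
  exact ⟨⟨1⟩, fun u v => (key u).symm.trans (key v)⟩
end

section
/- Let E = X ⊕ Y be a Banach space with associated projection p onto X along Y. If the induced map π₀(GL(X)) × π₀(GL(Y)) → π₀(GL(E)) is surjective, then the conjugacy class {t·p·t⁻¹ : t ∈ GL(E)} is contained in the path component of p in the space of idempotents of L(E). -/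
theorem stmt19 {X Y : Type*} [NormedAddCommGroup X] [NormedSpace ℝ X] [CompleteSpace X]
    [NormedAddCommGroup Y] [NormedSpace ℝ Y] [CompleteSpace Y]
    (p : (X × Y) →L[ℝ] (X × Y))
    (hp : p = (ContinuousLinearMap.id ℝ X).prodMap (0 : Y →L[ℝ] Y))
    (hsurj : ∀ t : ((X × Y) →L[ℝ] (X × Y))ˣ,
      ∃ (x : (X →L[ℝ] X)ˣ) (y : (Y →L[ℝ] Y)ˣ) (s : ((X × Y) →L[ℝ] (X × Y))ˣ),
        (s : (X × Y) →L[ℝ] (X × Y)) = (x : X →L[ℝ] X).prodMap (y : Y →L[ℝ] Y) ∧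
        Joined t s) :
    ∀ t : ((X × Y) →L[ℝ] (X × Y))ˣ,
      JoinedIn {r : (X × Y) →L[ℝ] (X × Y) | r * r = r} p
        ((t : (X × Y) →L[ℝ] (X × Y)) * p * (↑t⁻¹ : (X × Y) →L[ℝ] (X × Y))) := by
  intro t
  obtain ⟨x, y, s, hs, hj⟩ := hsurj t
  have hpp : p * p = p := by
    subst hp; ext v <;> simp [ContinuousLinearMap.mul_apply]
  have hcomm : (s : (X × Y) →L[ℝ] (X × Y)) * p = p * s := by
    rw [hs]; subst hp; ext v <;> simp [ContinuousLinearMap.mul_apply]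
  have key : ∀ u : ((X × Y) →L[ℝ] (X × Y))ˣ,
      ((u : (X × Y) →L[ℝ] (X × Y)) * p * ↑u⁻¹) * (↑u * p * ↑u⁻¹) = ↑u * p * ↑u⁻¹ := by
    intro u
    calc (↑u * p * ↑u⁻¹) * (↑u * p * ↑u⁻¹)
        = ↑u * (p * ((↑u⁻¹ * ↑u) * (p * ↑u⁻¹))) := by simp only [mul_assoc]
      _ = ↑u * (p * (p * ↑u⁻¹)) := by rw [Units.inv_mul, one_mul]
      _ = ↑u * p * ↑u⁻¹ := by rw [← mul_assoc p p, hpp, mul_assoc]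
  have hcont : Continuous fun u : ((X × Y) →L[ℝ] (X × Y))ˣ =>
      (u : (X × Y) →L[ℝ] (X × Y)) * p * (↑u⁻¹ : (X × Y) →L[ℝ] (X × Y)) := by
    exact ((Units.continuous_val.mul continuous_const).mul
      (Units.continuous_val.comp continuous_inv))
  obtain ⟨γ⟩ := hj
  have hsps : (s : (X × Y) →L[ℝ] (X × Y)) * p * ↑s⁻¹ = p := by
    rw [hcomm, Units.mul_inv_cancel_right]
  have h1 : JoinedIn {r : (X × Y) →L[ℝ] (X × Y) | r * r = r}
      ((t : (X × Y) →L[ℝ] (X × Y)) * p * ↑t⁻¹) ((s : (X × Y) →L[ℝ] (X × Y)) * p * ↑s⁻¹) :=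
    ⟨γ.map hcont, fun i => key (γ i)⟩
  rw [hsps] at h1
  exact h1.symm
end
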